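/- Let (sₙ) be the summing basis of c₀, i.e., sₙ = x₁ + ⋯ + xₙ where (xₙ) is the canonical unit vector basis of c₀. Then for every N ≥ 1, the vector-valued trigonometric polynomial f(t) = Σₙ₌₁ᴺ s₂ₙ e^{i2ⁿt} satisfies (∫₀^{2π} ‖f(t)‖²_{c₀} dt/2π)^{1/2} ≥ N^{1/2}. -/

import Mathlib

set_option maxHeartbeats 1000000

open Real
open scoped ENNReal

lemma integral_exp_key (a b : ℕ) :
    (∫ t in (0:ℝ)..(2 * π), Complex.exp ((Complex.I * ((2:ℂ)^a - 2^b)) * t))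
      = if a = b then (2 * π : ℂ) else 0 := by
  rcases eq_or_ne a b with h | h
  · simp [h]
  · have hc : Complex.I * ((2:ℂ)^a - 2^b) ≠ 0 := by
      refine mul_ne_zero Complex.I_ne_zero (sub_ne_zero.2 ?_)
      intro hh
      exact h (Nat.pow_right_injective le_rfl (by exact_mod_cast hh))
    rw [integral_exp_mul_complex hc, if_neg h]
    have h1 : Complex.exp (Complex.I * ((2:ℂ)^a - 2^b) * (2 * π)) = 1 := by
      have := Complex.exp_int_mul_two_pi_mul_I ((2:ℤ)^a - 2^b)
      rw [← this]
      push_cast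
      ring_nf
    simp [h1]

lemma integral_g_sq (N : ℕ) :
    (∫ t in (0:ℝ)..(2 * π),
        ‖∑ n ∈ Finset.Icc 1 N, Complex.exp (Complex.I * 2 ^ n * (t : ℂ))‖ ^ 2)
      = 2 * π * N := by
  set g : ℝ → ℂ := fun t => ∑ n ∈ Finset.Icc 1 N, Complex.exp (Complex.I * 2 ^ n * (t : ℂ))
    with hg
  have hexp : ∀ t : ℝ, ((‖g t‖ ^ 2 : ℝ) : ℂ)
      = ∑ n ∈ Finset.Icc 1 N, ∑ m ∈ Finset.Icc 1 N,
          Complex.exp ((Complex.I * ((2:ℂ)^n - 2^m)) * t) := by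
    intro t
    have : ((‖g t‖ ^ 2 : ℝ) : ℂ) = g t * (starRingEnd ℂ) (g t) := by
      rw [Complex.mul_conj]
      norm_cast
      rw [Complex.normSq_eq_norm_sq]
    rw [this, hg]
    simp only [map_sum, Finset.sum_mul_sum]
    refine Finset.sum_congr rfl fun n _ => Finset.sum_congr rfl fun m _ => ?_
    rw [← Complex.exp_conj, ← Complex.exp_add]
    congr 1
    simp only [map_mul, Complex.conj_I, Complex.conj_ofReal, map_pow, map_ofNat]
    ring
  have hint : ∀ n m : ℕ, IntervalIntegrable
      (fun t : ℝ => Complex.exp ((Complex.I * ((2:ℂ)^n - 2^m)) * t))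
      MeasureTheory.volume 0 (2 * π) := by
    intro n m
    exact (Complex.continuous_exp.comp (continuous_const.mul Complex.continuous_ofReal)).intervalIntegrable _ _
  have hintsum : ∀ n : ℕ, IntervalIntegrable
      (fun t : ℝ => ∑ m ∈ Finset.Icc 1 N, Complex.exp ((Complex.I * ((2:ℂ)^n - 2^m)) * t))
      MeasureTheory.volume 0 (2 * π) := by
    intro n
    exact (continuous_finset_sum _ fun m _ =>
      Complex.continuous_exp.comp (continuous_const.mul Complex.continuous_ofReal)).intervalIntegrable _ _
  have key : (∫ t in (0:ℝ)..(2 * π), ((‖g t‖ ^ 2 : ℝ) : ℂ)) = (2 * π * N : ℂ) := by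
    calc (∫ t in (0:ℝ)..(2 * π), ((‖g t‖ ^ 2 : ℝ) : ℂ))
        = ∫ t in (0:ℝ)..(2 * π), ∑ n ∈ Finset.Icc 1 N, ∑ m ∈ Finset.Icc 1 N,
            Complex.exp ((Complex.I * ((2:ℂ)^n - 2^m)) * t) := by
          exact intervalIntegral.integral_congr fun t _ => hexp t
      _ = ∑ n ∈ Finset.Icc 1 N,
            ∫ t in (0:ℝ)..(2 * π), ∑ m ∈ Finset.Icc 1 N,
              Complex.exp ((Complex.I * ((2:ℂ)^n - 2^m)) * t) :=
          intervalIntegral.integral_finset_sum (fun n _ => hintsum n)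
      _ = ∑ n ∈ Finset.Icc 1 N, ∑ m ∈ Finset.Icc 1 N,
            ∫ t in (0:ℝ)..(2 * π), Complex.exp ((Complex.I * ((2:ℂ)^n - 2^m)) * t) :=
          Finset.sum_congr rfl fun n _ =>
            intervalIntegral.integral_finset_sum fun m _ => hint n m
      _ = ∑ n ∈ Finset.Icc 1 N, ∑ m ∈ Finset.Icc 1 N, if n = m then (2 * π : ℂ) else 0 := by
          exact Finset.sum_congr rfl fun n _ => Finset.sum_congr rfl fun m _ =>
            integral_exp_key n m
      _ = (2 * π * N : ℂ) := by
          simp only [Finset.sum_ite_eq]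
          rw [Finset.sum_congr rfl (fun n hn => if_pos hn), Finset.sum_const, Nat.card_Icc]
          push_cast
          ring
  rw [intervalIntegral.integral_ofReal] at key
  apply Complex.ofReal_injective
  rw [key]
  push_cast
  ring

/-- With `(xₙ)` the canonical basis of `c₀` (realized inside `ℓ∞`, where the
norm agrees with the `c₀` norm) and `sₙ = x₁ + ⋯ + xₙ` the summing basis, for every
`N ≥ 1` the trigonometric polynomial `f(t) = Σ_{n=1}^N s_{2n} e^{i 2^n t}` satisfies
`(∫₀^{2π} ‖f(t)‖² dt / 2π)^{1/2} ≥ N^{1/2}`. -/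
theorem summing_basis_lower_bound (N : ℕ) (hN : 1 ≤ N) :
    let x : ℕ → lp (fun _ : ℕ => ℂ) ∞ := fun k => lp.single ∞ k 1
    let s : ℕ → lp (fun _ : ℕ => ℂ) ∞ := fun n => ∑ k ∈ Finset.Icc 1 n, x k
    let f : ℝ → lp (fun _ : ℕ => ℂ) ∞ := fun t =>
      ∑ n ∈ Finset.Icc 1 N, Complex.exp (Complex.I * 2 ^ n * (t : ℂ)) • s (2 * n)
    Real.sqrt N ≤ Real.sqrt ((1 / (2 * π)) * ∫ t in (0:ℝ)..(2 * π), ‖f t‖ ^ 2) := by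
  intro x s f
  set g : ℝ → ℂ := fun t => ∑ n ∈ Finset.Icc 1 N, Complex.exp (Complex.I * 2 ^ n * (t : ℂ))
    with hgdef
  -- coordinate 1 of s (2*n) is 1
  have hs1 : ∀ n : ℕ, n ∈ Finset.Icc 1 N → ((s (2 * n)) : ℕ → ℂ) 1 = 1 := by
    intro n hn
    have hn1 : 1 ≤ n := (Finset.mem_Icc.mp hn).1
    have h1 : (1 : ℕ) ∈ Finset.Icc 1 (2 * n) := Finset.mem_Icc.mpr ⟨le_rfl, by omega⟩
    calc ((s (2 * n)) : ℕ → ℂ) 1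
        = ∑ k ∈ Finset.Icc 1 (2 * n), ((lp.single ∞ k (1 : ℂ)) : ℕ → ℂ) 1 := by
          rw [show s (2 * n) = ∑ k ∈ Finset.Icc 1 (2 * n), lp.single ∞ k (1 : ℂ) from rfl,
            lp.coeFn_sum, Finset.sum_apply]
      _ = 1 := by
          rw [Finset.sum_eq_single_of_mem 1 h1]
          · exact lp.single_apply_self ∞ 1 1
          · intro k _ hk
            exact lp.single_apply_ne ∞ k 1 hk.symm
  -- coordinate 1 of f t is g t
  have hcoord : ∀ t : ℝ, ((f t) : ℕ → ℂ) 1 = g t := by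
    intro t
    rw [show f t = ∑ n ∈ Finset.Icc 1 N,
        Complex.exp (Complex.I * 2 ^ n * (t : ℂ)) • s (2 * n) from rfl,
      lp.coeFn_sum, Finset.sum_apply, hgdef]
    refine Finset.sum_congr rfl fun n hn => ?_
    rw [lp.coeFn_smul, Pi.smul_apply, hs1 n hn, smul_eq_mul, mul_one]
  -- continuity
  have hgc : Continuous g :=
    continuous_finset_sum _ fun n _ =>
      Complex.continuous_exp.comp (continuous_const.mul Complex.continuous_ofReal)
  have hfc : Continuous f :=
    continuous_finset_sum _ fun n _ =>
      (Complex.continuous_exp.comp (continuous_const.mul Complex.continuous_ofReal)).smul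
        continuous_const
  have hIg : IntervalIntegrable (fun t => ‖g t‖ ^ 2) MeasureTheory.volume 0 (2 * π) :=
    ((hgc.norm).pow 2).intervalIntegrable _ _
  have hIf : IntervalIntegrable (fun t => ‖f t‖ ^ 2) MeasureTheory.volume 0 (2 * π) :=
    ((hfc.norm).pow 2).intervalIntegrable _ _
  have hπ : (0 : ℝ) < 2 * π := by positivity
  have hbound : ∀ t : ℝ, ‖g t‖ ^ 2 ≤ ‖f t‖ ^ 2 := by
    intro t
    have h := lp.norm_apply_le_norm ENNReal.top_ne_zero (f t) 1
    rw [hcoord t] at h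
    exact pow_le_pow_left₀ (norm_nonneg _) h 2
  have hmono := intervalIntegral.integral_mono_on hπ.le hIg hIf fun t _ => hbound t
  have hgint : (∫ t in (0:ℝ)..(2 * π), ‖g t‖ ^ 2) = 2 * π * N := integral_g_sq N
  rw [hgint] at hmono
  refine Real.sqrt_le_sqrt ?_
  rw [one_div, inv_mul_eq_div, le_div_iff₀ hπ]
  linarith
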